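/- Let α = 23/6, β = 23/15, and T > 0. Let C be a finite set of resources with v(C) ≥ T, and let D be a set of resources with v(C \ D) < T/α. Define z_j = 1 if j ∈ D and v_j ≥ T/α; z_j = min{1/3, β·v_j/T} if j ∈ D and v_j < T/α; and z_j = 0 if j ∉ D. Then ∑_{j∈C} z_j ≥ 1. -/

import Mathlib

/-- Let `α = 23/6`, `β = 23/15` and `T > 0`.  Let `C` be a finite set of
resources with `v(C) ≥ T`, and let `D` be a set of resources with
`v(C \ D) < T/α`.  Define `z j = 1` if `j ∈ D` and `v j ≥ T/α`;
`z j = min (1/3) (β * v j / T)` if `j ∈ D` and `v j < T/α`; and `z j = 0`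
otherwise.  Then `∑ j ∈ C, z j ≥ 1`. -/
theorem santa_claus_dual_feasibility_claim
    {R : Type*} [DecidableEq R]
    (v : R → ℝ) (hv : ∀ j, 0 < v j) (T : ℝ) (hT : 0 < T)
    (C : Finset R) (hC : T ≤ ∑ j ∈ C, v j)
    (D : Set R) [DecidablePred (· ∈ D)]
    (hCD : ∑ j ∈ C.filter (fun j => j ∉ D), v j < T / (23 / 6))
    (z : R → ℝ)
    (hz : ∀ j, z j =
      if j ∈ D then
        (if T / (23 / 6) ≤ v j then 1 else min (1 / 3) ((23 / 15) * v j / T))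
      else 0) :
    1 ≤ ∑ j ∈ C, z j := by
  have hz0 : ∀ j, 0 ≤ z j := by
    intro j
    rw [hz j]
    split_ifs with h1 h2
    · norm_num
    · exact le_min (by norm_num) (div_nonneg (by nlinarith [(hv j).le]) hT.le)
    · exact le_rfl
  set E := C.filter (fun j => j ∈ D) with hE
  have hsplit := Finset.sum_filter_add_sum_filter_not C (fun j => j ∈ D) z
  have hzero : ∑ j ∈ C.filter (fun j => ¬ j ∈ D), z j = 0 :=
    Finset.sum_eq_zero (fun j hj => by
      rw [hz j, if_neg (Finset.mem_filter.mp hj).2])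
  have hmain : 1 ≤ ∑ j ∈ E, z j := by
    by_cases hbig : ∃ j ∈ E, T / (23 / 6) ≤ v j
    · obtain ⟨j, hjE, hjv⟩ := hbig
      have hzj : z j = 1 := by
        rw [hz j, if_pos (Finset.mem_filter.mp hjE).2, if_pos hjv]
      calc (1:ℝ) = z j := hzj.symm
        _ ≤ ∑ j ∈ E, z j := Finset.single_le_sum (fun i _ => hz0 i) hjE
    · push_neg at hbig
      -- all items in E are small
      have hTa : T / (23 / 6) = 6 * T / 23 := by ring
      have hsmall : ∀ j ∈ E, v j < 6 * T / 23 := fun j hj => hTa ▸ hbig j hj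
      -- total value on E
      have hvsplit := Finset.sum_filter_add_sum_filter_not C (fun j => j ∈ D) v
      have hEv : 17 * T / 23 < ∑ j ∈ E, v j := by
        rw [hTa] at hCD
        have := hC
        rw [← hvsplit] at this
        linarith
      -- rewrite z as scaled truncated value
      have hzmin : ∑ j ∈ E, z j = (23 / (15 * T)) * ∑ j ∈ E, min (v j) (5 * T / 23) := by
        rw [Finset.mul_sum]
        refine Finset.sum_congr rfl (fun j hj => ?_)
        rw [hz j, if_pos (Finset.mem_filter.mp hj).2,
          if_neg (not_le.mpr (hbig j hj))]
        have h5 : (23 / (15 * T)) * (5 * T / 23) = 1 / 3 := by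
          field_simp
          ring
        have hmin := mul_min_of_nonneg (v j) (5 * T / 23)
          (show (0:ℝ) ≤ 23 / (15 * T) by positivity)
        rw [hmin, h5, min_comm]
        congr 1
        ring
      set S := E.filter (fun j => 5 * T / 23 < v j) with hS
      have hmin_nonneg : ∀ j ∈ E, (0:ℝ) ≤ min (v j) (5 * T / 23) :=
        fun j _ => le_min (hv j).le (by positivity)
      have h1 : (S.card : ℝ) * (5 * T / 23) ≤ ∑ j ∈ E, min (v j) (5 * T / 23) := by
        have hsub : S ⊆ E := Finset.filter_subset _ _
        have : ∑ j ∈ S, min (v j) (5 * T / 23) ≤ ∑ j ∈ E, min (v j) (5 * T / 23) :=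
          Finset.sum_le_sum_of_subset_of_nonneg hsub
            (fun j hj _ => hmin_nonneg j hj)
        have heq : ∑ j ∈ S, min (v j) (5 * T / 23) = (S.card : ℝ) * (5 * T / 23) := by
          rw [Finset.sum_congr rfl (fun j hj => ?_), Finset.sum_const, nsmul_eq_mul]
          exact min_eq_right (le_of_lt (Finset.mem_filter.mp hj).2)
        linarith [heq ▸ this]
      have h2 : ∑ j ∈ E, (v j - min (v j) (5 * T / 23)) ≤ (S.card : ℝ) * (T / 23) := by
        have hsplit2 := Finset.sum_filter_add_sum_filter_not E
          (fun j => 5 * T / 23 < v j) (fun j => v j - min (v j) (5 * T / 23))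
        have hz2 : ∑ j ∈ E.filter (fun j => ¬ 5 * T / 23 < v j),
            (v j - min (v j) (5 * T / 23)) = 0 :=
          Finset.sum_eq_zero (fun j hj => by
            have := not_lt.mp (Finset.mem_filter.mp hj).2
            rw [min_eq_left this]; ring)
        have hb : ∑ j ∈ S, (v j - min (v j) (5 * T / 23)) ≤ (S.card : ℝ) * (T / 23) := by
          have := Finset.sum_le_card_nsmul S
            (fun j => v j - min (v j) (5 * T / 23)) (T / 23)
            (fun j hj => by
              show v j - min (v j) (5 * T / 23) ≤ T / 23
              have hjE := (Finset.mem_filter.mp hj).1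
              have hlt := (Finset.mem_filter.mp hj).2
              have := hsmall j hjE
              rw [min_eq_right (le_of_lt hlt)]
              linarith)
          rw [nsmul_eq_mul] at this
          exact this
        rw [← hsplit2, hz2, add_zero]
        exact hb
      have hkey : 15 * T / 23 ≤ ∑ j ∈ E, min (v j) (5 * T / 23) := by
        by_cases hk : 3 ≤ S.card
        · have : (3:ℝ) ≤ (S.card : ℝ) := by exact_mod_cast hk
          nlinarith
        · have hk2 : (S.card : ℝ) ≤ 2 := by
            have : S.card ≤ 2 := by omega
            exact_mod_cast this
          have hsum : ∑ j ∈ E, (v j - min (v j) (5 * T / 23))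
              = ∑ j ∈ E, v j - ∑ j ∈ E, min (v j) (5 * T / 23) :=
            Finset.sum_sub_distrib _ _
          rw [hsum] at h2
          nlinarith
      rw [hzmin]
      have hc : (0:ℝ) < 23 / (15 * T) := by positivity
      have := mul_le_mul_of_nonneg_left hkey hc.le
      have hone : (23 / (15 * T)) * (15 * T / 23) = 1 := by field_simp
      linarith
  calc (1:ℝ) ≤ ∑ j ∈ E, z j := hmain
    _ ≤ ∑ j ∈ E, z j + ∑ j ∈ C.filter (fun j => ¬ j ∈ D), z j := by rw [hzero, add_zero]
    _ = ∑ j ∈ C, z j := hsplit
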